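/- As θ ranges over [0,2π)², the eigenvalues μ_±(θ) = 3/4 ± (1/4)√(3 + 2κ(θ)) with κ(θ) = cos θ₁ + cos θ₂ + cos(θ₁-θ₂) sweep out exactly the intervals B₋ = [0, 3/4] and B₊ = [3/4, 3/2]. Consequently, the union of all eigenvalues of the Floquet matrices Δ_θ together with the flat band {3/2} equals [0, 3/2]. -/
import Mathlib


open Set

/-- `κ(θ) = cos θ₁ + cos θ₂ + cos(θ₁-θ₂)`. -/
noncomputable def kagomeKappa (θ : ℝ × ℝ) : ℝ :=
  Real.cos θ.1 + Real.cos θ.2 + Real.cos (θ.1 - θ.2)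

/-- The lower Floquet band function `μ₋(θ) = 3/4 - (1/4)√(3+2κ(θ))`. -/
noncomputable def kagomeMuMinus (θ : ℝ × ℝ) : ℝ :=
  3 / 4 - Real.sqrt (3 + 2 * kagomeKappa θ) / 4

/-- The upper Floquet band function `μ₊(θ) = 3/4 + (1/4)√(3+2κ(θ))`. -/
noncomputable def kagomeMuPlus (θ : ℝ × ℝ) : ℝ :=
  3 / 4 + Real.sqrt (3 + 2 * kagomeKappa θ) / 4

lemma kagome_sqrt_le (θ : ℝ × ℝ) : Real.sqrt (3 + 2 * kagomeKappa θ) ≤ 3 := by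
  have h : 3 + 2 * kagomeKappa θ ≤ 9 := by
    have h1 := Real.cos_le_one θ.1
    have h2 := Real.cos_le_one θ.2
    have h3 := Real.cos_le_one (θ.1 - θ.2)
    unfold kagomeKappa; linarith
  calc Real.sqrt (3 + 2 * kagomeKappa θ) ≤ Real.sqrt 9 := Real.sqrt_le_sqrt h
    _ = 3 := by
      rw [show (9:ℝ) = 3 ^ 2 by norm_num, Real.sqrt_sq (by norm_num : (0:ℝ) ≤ 3)]

lemma kagome_sqrt_surj {s : ℝ} (hs : s ∈ Icc (0:ℝ) 3) :
    ∃ θ ∈ Ico 0 (2 * Real.pi) ×ˢ Ico 0 (2 * Real.pi),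
      Real.sqrt (3 + 2 * kagomeKappa θ) = s := by
  obtain ⟨hs0, hs3⟩ := hs
  set c : ℝ := (s - 1) / 2 with hc
  have hc1 : -1 ≤ c := by rw [hc]; linarith
  have hc1' : -1 < c := by rw [hc]; linarith
  have hc2 : c ≤ 1 := by rw [hc]; linarith
  set t : ℝ := Real.arccos c with ht
  have hpi := Real.pi_pos
  have ht0 : 0 ≤ t := Real.arccos_nonneg c
  have htpi : t < Real.pi := by
    refine lt_of_le_of_ne (Real.arccos_le_pi c) fun h => ?_
    have := Real.arccos_eq_pi.mp h
    linarith
  refine ⟨(t, 2 * t), ⟨⟨ht0, by linarith⟩,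
    ⟨by simp only; linarith, by simp only; linarith⟩⟩, ?_⟩
  have hcos : Real.cos t = c := Real.cos_arccos hc1 hc2
  have hcos2 : Real.cos (2 * t) = 2 * c ^ 2 - 1 := by
    rw [Real.cos_two_mul, hcos]
  have hκ : 3 + 2 * kagomeKappa (t, 2 * t) = s ^ 2 := by
    unfold kagomeKappa
    simp only
    rw [show t - 2 * t = -t by ring, Real.cos_neg, hcos2, hcos, hc]
    ring
  rw [hκ, Real.sqrt_sq hs0]

/-- As `θ` ranges over `[0,2π)²`, the eigenvalue branches `μ₋` and `μ₊` sweep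
out exactly `B₋ = [0,3/4]` and `B₊ = [3/4,3/2]`; consequently the union of all eigenvalues
of the Floquet matrices together with the flat band `{3/2}` equals `[0,3/2]`. -/
theorem kagome_band_structure :
    kagomeMuMinus '' (Ico 0 (2 * Real.pi) ×ˢ Ico 0 (2 * Real.pi)) = Icc 0 (3 / 4) ∧
    kagomeMuPlus '' (Ico 0 (2 * Real.pi) ×ˢ Ico 0 (2 * Real.pi)) = Icc (3 / 4) (3 / 2) ∧
    ((⋃ θ ∈ Ico 0 (2 * Real.pi) ×ˢ Ico 0 (2 * Real.pi),
        ({kagomeMuMinus θ, kagomeMuPlus θ} : Set ℝ)) ∪ {3 / 2}) = Icc 0 (3 / 2) := by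
  have hminus : kagomeMuMinus '' (Ico 0 (2 * Real.pi) ×ˢ Ico 0 (2 * Real.pi))
      = Icc 0 (3 / 4) := by
    ext x
    constructor
    · rintro ⟨θ, _, rfl⟩
      have h1 := kagome_sqrt_le θ
      have h2 := Real.sqrt_nonneg (3 + 2 * kagomeKappa θ)
      exact ⟨by unfold kagomeMuMinus; linarith, by unfold kagomeMuMinus; linarith⟩
    · rintro ⟨hx0, hx1⟩
      obtain ⟨θ, hθ, hθs⟩ := kagome_sqrt_surj (s := 3 - 4 * x) ⟨by linarith, by linarith⟩
      exact ⟨θ, hθ, by unfold kagomeMuMinus; rw [hθs]; ring⟩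
  have hplus : kagomeMuPlus '' (Ico 0 (2 * Real.pi) ×ˢ Ico 0 (2 * Real.pi))
      = Icc (3 / 4) (3 / 2) := by
    ext x
    constructor
    · rintro ⟨θ, _, rfl⟩
      have h1 := kagome_sqrt_le θ
      have h2 := Real.sqrt_nonneg (3 + 2 * kagomeKappa θ)
      exact ⟨by unfold kagomeMuPlus; linarith, by unfold kagomeMuPlus; linarith⟩
    · rintro ⟨hx0, hx1⟩
      obtain ⟨θ, hθ, hθs⟩ := kagome_sqrt_surj (s := 4 * x - 3) ⟨by linarith, by linarith⟩
      exact ⟨θ, hθ, by unfold kagomeMuPlus; rw [hθs]; ring⟩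
  refine ⟨hminus, hplus, ?_⟩
  have hunion : (⋃ θ ∈ Ico 0 (2 * Real.pi) ×ˢ Ico 0 (2 * Real.pi),
      ({kagomeMuMinus θ, kagomeMuPlus θ} : Set ℝ))
      = kagomeMuMinus '' (Ico 0 (2 * Real.pi) ×ˢ Ico 0 (2 * Real.pi))
        ∪ kagomeMuPlus '' (Ico 0 (2 * Real.pi) ×ˢ Ico 0 (2 * Real.pi)) := by
    ext x
    simp only [mem_iUnion, mem_union, mem_image, mem_insert_iff, mem_singleton_iff]
    constructor
    · rintro ⟨θ, hθ, h | h⟩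
      · exact Or.inl ⟨θ, hθ, h.symm⟩
      · exact Or.inr ⟨θ, hθ, h.symm⟩
    · rintro (⟨θ, hθ, h⟩ | ⟨θ, hθ, h⟩)
      · exact ⟨θ, hθ, Or.inl h.symm⟩
      · exact ⟨θ, hθ, Or.inr h.symm⟩
  rw [hunion, hminus, hplus]
  ext x
  simp only [mem_union, mem_Icc, mem_singleton_iff]
  constructor
  · rintro ((⟨h1, h2⟩ | ⟨h1, h2⟩) | h) <;> constructor <;> first | linarith | (subst h; norm_num)
  · rintro ⟨h1, h2⟩
    rcases le_total x (3/4) with h | h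
    · exact Or.inl (Or.inl ⟨h1, h⟩)
    · exact Or.inl (Or.inr ⟨h, h2⟩)
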